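/- The number E(n) of extended Cartesian trees on n nodes satisfies lg E(n) ≥ 2n − O(log n); consequently the effective entropy of range top-2 queries on arrays of length n is at least 2n − O(log n) bits. -/

import Mathlib

inductive BT where
  | leaf : BT
  | node : BT → BT → BT
deriving DecidableEq

namespace BT

/-- Number of nodes. -/
def size : BT → ℕ
  | leaf => 0
  | node l r => l.size + r.size + 1

/-- Inorder list of node positions (paths from the root; `false` = left step). -/
def inList : BT → List (List Bool)
  | leaf => []
  | node l r => (l.inList).map (List.cons false) ++ [] :: (r.inList).map (List.cons true)

/-- Preorder list of node positions. -/
def preList : BT → List (List Bool)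
  | leaf => []
  | node l r => [] :: ((l.preList).map (List.cons false) ++ (r.preList).map (List.cons true))

/-- Subtree rooted at a given position, if the position is valid. -/
def subtree? : BT → List Bool → Option BT
  | t, [] => some t
  | leaf, _ :: _ => none
  | node l r, b :: p => if b then r.subtree? p else l.subtree? p

/-- Size of the left spine (maximal path following left children, top node included). -/
def Lspine : BT → ℕ
  | leaf => 0
  | node l _ => l.Lspine + 1

/-- Size of the right spine. -/
def Rspine : BT → ℕ
  | leaf => 0
  | node _ r => r.Rspine + 1

/-- Size of the left inner spine of the root: right spine of the left child. -/
def lv : BT → ℕ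
  | leaf => 0
  | node l _ => l.Rspine

/-- Size of the right inner spine of the root: left spine of the right child. -/
def rv : BT → ℕ
  | leaf => 0
  | node _ r => r.Lspine

/-- Sum of `f` over all (sub)trees rooted at nodes of the tree. -/
def sumNodes (f : BT → ℕ) : BT → ℕ
  | leaf => 0
  | node l r => f (node l r) + sumNodes f l + sumNodes f r

/-- Number of leaf nodes (nodes with no children). -/
def leaves : BT → ℕ
  | leaf => 0
  | node leaf leaf => 1
  | node l r => leaves l + leaves r

end BT

/-- Longest common prefix of two paths: the LCA of two positions in a binary tree. -/
def lcp : List Bool → List Bool → List Bool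
  | a :: p, b :: q => if a = b then a :: lcp p q else []
  | _, _ => []

/-- Index of the minimum element of a list (0 if empty). -/
def minIdx {α : Type*} [LinearOrder α] (l : List α) : ℕ :=
  match l.argmin id with
  | none => 0
  | some a => l.idxOf a

/-- Cartesian tree construction with fuel. -/
def cartesianAux {α : Type*} [LinearOrder α] : ℕ → List α → BT
  | 0, _ => .leaf
  | _ + 1, [] => .leaf
  | n + 1, l@(_ :: _) =>
      .node (cartesianAux n (l.take (minIdx l))) (cartesianAux n (l.drop (minIdx l + 1)))

/-- The Cartesian tree of a list: root at the position of the minimum,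
recursively built on the prefix before and the suffix after the minimum. -/
def cartesian {α : Type*} [LinearOrder α] (l : List α) : BT :=
  cartesianAux l.length l

/-- `k` is the position of the minimum of `A` on the range `[i, j]`. -/
def isArgmin {α : Type*} [LinearOrder α] {n : ℕ} (A : Fin n → α) (i j k : Fin n) : Prop :=
  i ≤ k ∧ k ≤ j ∧ ∀ m, i ≤ m → m ≤ j → A k ≤ A m

/-- `k` is the position of the second smallest element of `A` on the range `[i, j]`. -/
def isSecondMin {α : Type*} [LinearOrder α] {n : ℕ} (A : Fin n → α) (i j k : Fin n) : Prop :=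
  i ≤ k ∧ k ≤ j ∧
    ∃ m, isArgmin A i j m ∧ k ≠ m ∧ ∀ l, i ≤ l → l ≤ j → l ≠ m → A k ≤ A l

/-- The node with inorder number `i` in `t` has a left child. -/
def hasLeftChildAt (t : BT) (i : ℕ) : Prop :=
  ∃ (p : List Bool) (ll lr r : BT),
    t.inList[i]? = some p ∧ t.subtree? p = some (.node (.node ll lr) r)

/-- Extended Cartesian trees: binary trees in which every two-child node carries a merge
word for its two inner spines. -/
inductive EBT where
  | leaf : EBT
  | node : EBT → EBT → List Bool → EBT
deriving DecidableEq

namespace EBT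

def size : EBT → ℕ
  | leaf => 0
  | node l r _ => l.size + r.size + 1

def Lspine : EBT → ℕ
  | leaf => 0
  | node l _ _ => l.Lspine + 1

def Rspine : EBT → ℕ
  | leaf => 0
  | node _ r _ => r.Rspine + 1

/-- Validity: at two-child nodes the merge word has length `l_v + r_v` with exactly
`r_v` occurrences of `true`; elsewhere it is empty. -/
def valid : EBT → Prop
  | leaf => True
  | node l r m =>
      l.valid ∧ r.valid ∧
        (if l ≠ leaf ∧ r ≠ leaf
          then m.length = l.Rspine + r.Lspine ∧ m.count true = r.Lspine
          else m = [])

end EBT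

namespace Stmt17Aux

def vals : BT → ℕ → List ℕ
  | .leaf, _ => []
  | .node l r, c => vals l (c+1) ++ c :: vals r (c + 1 + l.size)

lemma vals_length (t : BT) (c : ℕ) : (vals t c).length = t.size := by
  induction t generalizing c with
  | leaf => rfl
  | node l r ihl ihr => simp [vals, BT.size, ihl, ihr]; omega

lemma vals_mem_bounds {t : BT} {c x : ℕ} (hx : x ∈ vals t c) : c ≤ x ∧ x < c + t.size := by
  induction t generalizing c with
  | leaf => simp [vals] at hx
  | node l r ihl ihr =>
    simp only [vals, List.mem_append, List.mem_cons] at hx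
    simp only [BT.size]
    rcases hx with h | h | h
    · have := ihl h; omega
    · omega
    · have := ihr h; omega

lemma vals_nodup (t : BT) (c : ℕ) : (vals t c).Nodup := by
  induction t generalizing c with
  | leaf => simp [vals]
  | node l r ihl ihr =>
    simp only [vals]
    rw [List.nodup_append]
    refine ⟨ihl _, ?_, ?_⟩
    · rw [List.nodup_cons]
      refine ⟨fun hc => ?_, ihr _⟩
      have := vals_mem_bounds hc; omega
    · intro x hx y hy
      have h1 := vals_mem_bounds hx
      rcases List.mem_cons.1 hy with rfl | hy
      · omega
      · have := vals_mem_bounds hy; omega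

lemma vals_getD_mem {t : BT} {c k : ℕ} (hk : k < t.size) : (vals t c).getD k 0 ∈ vals t c := by
  rw [List.getD_eq_getElem _ _ (by rw [vals_length]; exact hk)]
  exact List.getElem_mem _

lemma vals_getD_root (l r : BT) (c : ℕ) : (vals (.node l r) c).getD l.size 0 = c := by
  have hlen : l.size < (vals (.node l r) c).length := by
    rw [vals_length]; simp [BT.size]
  rw [List.getD_eq_getElem _ _ hlen]
  show (vals l (c+1) ++ c :: vals r (c + 1 + l.size))[l.size]'(by simp only [List.length_append, List.length_cons, vals_length]; omega) = c
  rw [List.getElem_append_right (by rw [vals_length])]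
  simp [vals_length]

lemma vals_getD_left {l r : BT} {c k : ℕ} (hk : k < l.size) :
    (vals (.node l r) c).getD k 0 = (vals l (c+1)).getD k 0 := by
  have h1 : k < (vals l (c+1)).length := by rw [vals_length]; exact hk
  have h2 : k < (vals (.node l r) c).length := by rw [vals_length]; simp [BT.size]; omega
  rw [List.getD_eq_getElem _ _ h1, List.getD_eq_getElem _ _ h2]
  exact List.getElem_append_left h1

lemma vals_getD_right {l r : BT} {c k : ℕ} (hk : k < r.size) :
    (vals (.node l r) c).getD (l.size + 1 + k) 0 = (vals r (c + 1 + l.size)).getD k 0 := by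
  have h1 : k < (vals r (c+1+l.size)).length := by rw [vals_length]; exact hk
  have h2 : l.size + 1 + k < (vals (.node l r) c).length := by
    rw [vals_length]; simp [BT.size]; omega
  rw [List.getD_eq_getElem _ _ h1, List.getD_eq_getElem _ _ h2]
  show (vals l (c+1) ++ c :: vals r (c + 1 + l.size))[l.size + 1 + k]'(by simp only [List.length_append, List.length_cons, vals_length]; omega) = _
  rw [List.getElem_append_right (by rw [vals_length]; omega)]
  have : l.size + 1 + k - (vals l (c+1)).length = k + 1 := by rw [vals_length]; omega
  simp only [this, List.getElem_cons_succ]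

lemma exists_isArgmin {n : ℕ} (A : Fin n → ℝ) {i j : Fin n} (hij : i ≤ j) :
    ∃ k, isArgmin A i j k := by
  obtain ⟨k, hk, hmin⟩ := (Finset.Icc i j).exists_min_image A ⟨i, Finset.mem_Icc.2 ⟨le_refl _, hij⟩⟩
  rw [Finset.mem_Icc] at hk
  exact ⟨k, hk.1, hk.2, fun m h1 h2 => hmin m (Finset.mem_Icc.2 ⟨h1, h2⟩)⟩

lemma exists_isSecondMin {n : ℕ} (A : Fin n → ℝ) {i j : Fin n} (hij : i < j) :
    ∃ k, isSecondMin A i j k := by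
  obtain ⟨m, hm⟩ := exists_isArgmin A hij.le
  have hne : ((Finset.Icc i j).erase m).Nonempty := by
    rcases eq_or_ne m i with rfl | h
    · exact ⟨j, Finset.mem_erase.2 ⟨hij.ne', Finset.mem_Icc.2 ⟨hij.le, le_refl _⟩⟩⟩
    · exact ⟨i, Finset.mem_erase.2 ⟨h.symm, Finset.mem_Icc.2 ⟨le_refl _, hij.le⟩⟩⟩
  obtain ⟨k, hk, hmin⟩ := Finset.exists_min_image _ A hne
  rw [Finset.mem_erase, Finset.mem_Icc] at hk
  exact ⟨k, hk.2.1, hk.2.2, m, hm, hk.1, fun p h1 h2 hpm =>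
    hmin p (Finset.mem_erase.2 ⟨hpm, Finset.mem_Icc.2 ⟨h1, h2⟩⟩)⟩

noncomputable def ansF {n : ℕ} (A : Fin n → ℝ) : ∀ i j : Fin n, i < j → Fin n × Fin n :=
  fun _ _ h => (Classical.choose (exists_isArgmin A h.le), Classical.choose (exists_isSecondMin A h))

lemma ansF_spec {n : ℕ} (A : Fin n → ℝ) (i j : Fin n) (h : i < j) :
    isArgmin A i j (ansF A i j h).1 ∧ isSecondMin A i j (ansF A i j h).2 :=
  ⟨Classical.choose_spec (exists_isArgmin A h.le), Classical.choose_spec (exists_isSecondMin A h)⟩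

lemma isArgmin_unique {n : ℕ} {A : Fin n → ℝ} (hA : Function.Injective A) {i j k k' : Fin n}
    (h1 : isArgmin A i j k) (h2 : isArgmin A i j k') : k = k' :=
  hA (le_antisymm (h1.2.2 _ h2.1 h2.2.1) (h2.2.2 _ h1.1 h1.2.1))

lemma size_eq_zero {t : BT} (h : t.size = 0) : t = .leaf := by
  cases t with
  | leaf => rfl
  | node l r => simp [BT.size] at h

lemma rec_eq {n : ℕ} {A A' : Fin n → ℝ}
    (hG : ∀ (i j : Fin n) (_ : i < j) (k k' : Fin n),
      isArgmin A i j k → isArgmin A' i j k' → k = k') :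
    ∀ (m : ℕ) (s s' : BT) (a c c' : ℕ), s.size = m → s'.size = m → a + m ≤ n →
    (∀ k (_ : k < m) (h : a + k < n), A ⟨a+k, h⟩ = ((vals s c).getD k 0 : ℕ)) →
    (∀ k (_ : k < m) (h : a + k < n), A' ⟨a+k, h⟩ = ((vals s' c').getD k 0 : ℕ)) →
    s = s' := by
  intro m
  induction m using Nat.strong_induction_on with
  | _ m IH =>
    intro s s' a c c' hs hs' han HA HA'
    cases s with
    | leaf =>
      have hm0 : m = 0 := by simpa [BT.size] using hs.symm
      exact (size_eq_zero (hs'.trans hm0)).symm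
    | node l r =>
      cases s' with
      | leaf =>
        exfalso
        have h1 : m = 0 := by simpa [BT.size] using hs'.symm
        have h2 := hs
        simp only [BT.size] at h2
        omega
      | node l' r' =>
        have hm1 : 1 ≤ m := by rw [← hs]; simp [BT.size]
        by_cases hm2 : m = 1
        · have h1 : l.size = 0 ∧ r.size = 0 := by
            have := hs; simp [BT.size] at this; omega
          have h2 : l'.size = 0 ∧ r'.size = 0 := by
            have := hs'; simp [BT.size] at this; omega
          rw [size_eq_zero h1.1, size_eq_zero h1.2, size_eq_zero h2.1, size_eq_zero h2.2]
        -- m ≥ 2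
        have hm2' : 2 ≤ m := by omega
        have hij : (⟨a, by omega⟩ : Fin n) < ⟨a + m - 1, by omega⟩ := by
          simp [Fin.lt_def]; omega
        have key : ∀ (B : Fin n → ℝ) (u v : BT) (d : ℕ) (hsz : (u.node v).size = m),
            (∀ k (_ : k < m) (h : a + k < n), B ⟨a+k, h⟩ = ((vals (u.node v) d).getD k 0 : ℕ)) →
            isArgmin B ⟨a, by omega⟩ ⟨a + m - 1, by omega⟩ ⟨a + u.size, by
              simp only [BT.size] at hsz; omega⟩ := by
          intro B u v d hsz HB
          have hus : u.size < m := by simp only [BT.size] at hsz; omega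
          refine ⟨by simp [Fin.le_def], by simp [Fin.le_def]; omega, ?_⟩
          intro p h1 h2
          simp only [Fin.le_def] at h1 h2
          have hk : p.val - a < m := by omega
          have hpa : p = ⟨a + (p.val - a), by omega⟩ := by ext; simp; omega
          rw [hpa, HB _ hk, HB _ hus (by omega)]
          have hroot : (vals (u.node v) d).getD u.size 0 = d := vals_getD_root u v d
          rw [hroot]
          exact_mod_cast (vals_mem_bounds (vals_getD_mem (c := d) (hsz ▸ hk))).1
        have e1 := key A l r c hs HA
        have e2 := key A' l' r' c' hs' HA'
        have := hG _ _ hij _ _ e1 e2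
        have hLL : l.size = l'.size := by
          rw [Fin.mk.injEq] at this
          omega
        have hl : l = l' := by
          refine IH l.size (by simp [BT.size] at hs; omega) l l' a (c+1) (c'+1) rfl hLL.symm
            (by simp only [BT.size] at hs; omega) ?_ ?_
          · intro k hk h
            rw [HA k (by simp [BT.size] at hs; omega) h, vals_getD_left hk]
          · intro k hk h
            rw [HA' k (by simp [BT.size] at hs'; omega) h, vals_getD_left (hLL ▸ hk)]
        have hRR : r.size = r'.size := by
          simp [BT.size] at hs hs'; omega
        have hr : r = r' := by
          refine IH r.size (by simp [BT.size] at hs; omega) r r' (a + l.size + 1)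
            (c + 1 + l.size) (c' + 1 + l'.size) rfl hRR.symm (by simp [BT.size] at hs; omega) ?_ ?_
          · intro k hk h
            have hidx : l.size + 1 + k < m := by simp [BT.size] at hs; omega
            have : (⟨a + l.size + 1 + k, h⟩ : Fin n) = ⟨a + (l.size + 1 + k), by omega⟩ := by
              ext; simp; omega
            rw [this, HA _ hidx, vals_getD_right hk]
          · intro k hk h
            have hidx : l'.size + 1 + k < m := by simp [BT.size] at hs'; omega
            have : (⟨a + l.size + 1 + k, h⟩ : Fin n) = ⟨a + (l'.size + 1 + k), by omega⟩ := by
              ext; simp; omega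
            rw [this, HA' _ hidx, vals_getD_right (hRR ▸ hk)]
        rw [hl, hr]

noncomputable def arr (t : BT) (n : ℕ) : Fin n → ℝ :=
  fun i => ((vals t 0).getD i.val 0 : ℕ)

lemma arr_eq_get {t : BT} {n : ℕ} (ht : t.size = n) (i : Fin n) :
    arr t n i = ((vals t 0).get ⟨i.val, by rw [vals_length, ht]; exact i.2⟩ : ℕ) := by
  rw [arr, List.getD_eq_getElem _ _ (by rw [vals_length, ht]; exact i.2)]
  rfl

lemma arr_injective {t : BT} {n : ℕ} (ht : t.size = n) : Function.Injective (arr t n) := by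
  intro i j hij
  rw [arr_eq_get ht, arr_eq_get ht] at hij
  have := ((vals_nodup t 0).get_inj_iff).1 (Nat.cast_injective hij)
  simpa [Fin.ext_iff] using congrArg Fin.val this

def toBT : Tree Unit → BT
  | BinaryTree.nil => .leaf
  | BinaryTree.node _ l r => .node (toBT l) (toBT r)

lemma toBT_size (u : Tree Unit) : (toBT u).size = u.numNodes := by
  induction u with
  | nil => rfl
  | node a l r ihl ihr => simp [toBT, BT.size, Tree.numNodes, ihl, ihr]

lemma toBT_injective : Function.Injective toBT := by
  intro u v h
  induction u generalizing v with
  | nil => cases v with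
    | nil => rfl
    | node a l r => exact absurd h (by simp [toBT])
  | node a l r ihl ihr =>
    cases v with
    | nil => exact absurd h (by simp [toBT])
    | node a' l' r' =>
      simp only [toBT, BT.node.injEq] at h
      rw [ihl h.1, ihr h.2]

lemma tree_eq_of_ansF_eq {n : ℕ} (hn : 2 ≤ n) {t t' : BT} (ht : t.size = n) (ht' : t'.size = n)
    (h : ansF (arr t n) = ansF (arr t' n)) : t = t' := by
  have hG : ∀ (i j : Fin n) (hij : i < j) (k k' : Fin n),
      isArgmin (arr t n) i j k → isArgmin (arr t' n) i j k' → k = k' := by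
    intro i j hij k k' h1 h2
    have e1 := isArgmin_unique (arr_injective ht) h1 (ansF_spec (arr t n) i j hij).1
    have e2 := isArgmin_unique (arr_injective ht') h2 (ansF_spec (arr t' n) i j hij).1
    rw [e1, e2, h]
  refine rec_eq hG n t t' 0 0 0 ht ht' (by omega) ?_ ?_ <;>
    · intro k hk h
      simp [arr]

def toEBT : Tree Unit → EBT
  | BinaryTree.nil => .leaf
  | BinaryTree.node _ l r =>
      EBT.node (toEBT l) (toEBT r)
        (if toEBT l = EBT.leaf ∨ toEBT r = EBT.leaf then []
         else List.replicate (toEBT r).Lspine true ++ List.replicate (toEBT l).Rspine false)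

lemma toEBT_size (u : Tree Unit) : (toEBT u).size = u.numNodes := by
  induction u with
  | nil => rfl
  | node a l r ihl ihr => simp [toEBT, EBT.size, Tree.numNodes, ihl, ihr]

lemma toEBT_valid (u : Tree Unit) : (toEBT u).valid := by
  induction u with
  | nil => trivial
  | node a l r ihl ihr =>
    refine ⟨ihl, ihr, ?_⟩
    by_cases hc : toEBT l = EBT.leaf ∨ toEBT r = EBT.leaf
    · rw [if_pos hc, if_neg (by tauto)]
    · push_neg at hc
      rw [if_neg (by tauto : ¬(toEBT l = EBT.leaf ∨ toEBT r = EBT.leaf)),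
        if_pos (⟨hc.1, hc.2⟩ : toEBT l ≠ EBT.leaf ∧ toEBT r ≠ EBT.leaf)]
      constructor
      · simp [List.length_append, List.length_replicate]; omega
      · simp [List.count_append, List.count_replicate]

lemma toEBT_injective : Function.Injective toEBT := by
  intro u v h
  induction u generalizing v with
  | nil => cases v with
    | nil => rfl
    | node a l r => exact absurd h (by simp [toEBT])
  | node a l r ihl ihr =>
    cases v with
    | nil => exact absurd h (by simp [toEBT])
    | node a' l' r' =>
      simp only [toEBT, EBT.node.injEq] at h
      rw [ihl h.1, ihr h.2.1]

def wordFinset (d : ℕ) : Finset (List Bool) :=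
  (Finset.range (d+1)).biUnion fun k => (Finset.univ : Finset (Fin k → Bool)).image List.ofFn

lemma mem_wordFinset {d : ℕ} {l : List Bool} (h : l.length ≤ d) : l ∈ wordFinset d := by
  simp only [wordFinset, Finset.mem_biUnion, Finset.mem_range, Finset.mem_image,
    Finset.mem_univ, true_and]
  exact ⟨l.length, by omega, l.get, List.ofFn_get l⟩

lemma ebt_Lspine_le_size (e : EBT) : e.Lspine ≤ e.size := by
  induction e with
  | leaf => simp [EBT.Lspine, EBT.size]
  | node l r m ihl ihr => simp [EBT.Lspine, EBT.size]; omega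

lemma ebt_Rspine_le_size (e : EBT) : e.Rspine ≤ e.size := by
  induction e with
  | leaf => simp [EBT.Rspine, EBT.size]
  | node l r m ihl ihr => simp [EBT.Rspine, EBT.size]; omega

def ebtFinset : ℕ → Finset EBT
  | 0 => {EBT.leaf}
  | k+1 => insert EBT.leaf <|
      ((ebtFinset k ×ˢ ebtFinset k) ×ˢ wordFinset (2*k)).image
        fun p => EBT.node p.1.1 p.1.2 p.2

lemma mem_ebtFinset {e : EBT} (he : e.valid) : ∀ k, e.size ≤ k → e ∈ ebtFinset k := by
  induction e with
  | leaf =>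
    intro k _
    cases k with
    | zero => simp [ebtFinset]
    | succ k => simp [ebtFinset]
  | node l r m ihl ihr =>
    intro k hk
    obtain ⟨hl, hr, hw⟩ := he
    have hsz : l.size + r.size + 1 ≤ k := hk
    obtain ⟨k', rfl⟩ : ∃ k', k = k' + 1 := ⟨k - 1, by omega⟩
    have hwlen : m.length ≤ 2 * k' := by
      by_cases hc : l ≠ EBT.leaf ∧ r ≠ EBT.leaf
      · rw [if_pos hc] at hw
        have h1 := ebt_Rspine_le_size l
        have h2 := ebt_Lspine_le_size r
        omega
      · rw [if_neg hc] at hw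
        simp [hw]
    simp only [ebtFinset, Finset.mem_insert, Finset.mem_image, Finset.mem_product]
    right
    exact ⟨((l, r), m), ⟨⟨ihl hl k' (by omega), ihr hr k' (by omega)⟩, mem_wordFinset hwlen⟩, rfl⟩

lemma finite_valid_ebt (n : ℕ) : Finite {e : EBT // e.size = n ∧ e.valid} := by
  have hmem : ∀ e : {e : EBT // e.size = n ∧ e.valid}, e.1 ∈ ebtFinset n :=
    fun e => mem_ebtFinset e.2.2 n (le_of_eq e.2.1)
  have hfin : {e : EBT | e.size = n ∧ e.valid}.Finite :=
    Set.Finite.subset (ebtFinset n).finite_toSet (fun e he => mem_ebtFinset he.2 n (le_of_eq he.1))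
  exact hfin.to_subtype

lemma catalan_lower (n : ℕ) (hn : 2 ≤ n) :
    2 * (n : ℝ) - 4 * Real.logb 2 n ≤ Real.logb 2 (catalan n) := by
  have h1 : (4:ℕ)^n ≤ 2 * n * n.centralBinom :=
    Nat.four_pow_le_two_mul_self_mul_centralBinom n (by omega)
  have h2 : (n + 1) * catalan n = n.centralBinom := succ_mul_catalan_eq_centralBinom n
  have hcpos : 0 < catalan n := by
    by_contra hc
    push_neg at hc
    interval_cases h : catalan n
    · have := Nat.centralBinom_pos n; omega
  have h3 : (4:ℕ)^n ≤ 2 * n * ((n + 1) * catalan n) := by rw [h2]; exact h1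
  have h4 : ((4:ℝ))^n ≤ (2 * n * (n + 1)) * catalan n := by
    have := (Nat.cast_le (α := ℝ)).2 h3
    push_cast at this ⊢
    linarith
  have h5 : (2 * (n:ℝ) * (n + 1)) * catalan n ≤ (n:ℝ)^4 * catalan n := by
    have hc1 : (1:ℝ) ≤ catalan n := by exact_mod_cast hcpos
    have hn2 : (2:ℝ) ≤ n := by exact_mod_cast hn
    have key : 2 * (n:ℝ) * (n + 1) ≤ (n:ℝ)^4 := by
      nlinarith [sq_nonneg (n:ℝ), sq_nonneg ((n:ℝ)-1), sq_nonneg ((n:ℝ)-2), sq_nonneg ((n:ℝ)*(n:ℝ)-2)]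
    have : (0:ℝ) ≤ catalan n := by positivity
    nlinarith
  have h6 : Real.logb 2 ((4:ℝ)^n) ≤ Real.logb 2 ((n:ℝ)^4 * catalan n) :=
    Real.logb_le_logb_of_le one_lt_two (by positivity) (h4.trans h5)
  have hne1 : ((n:ℝ))^4 ≠ 0 := by positivity
  have hne2 : ((catalan n : ℕ) : ℝ) ≠ 0 := by exact_mod_cast hcpos.ne'
  rw [Real.logb_mul hne1 hne2, Real.logb_pow, Real.logb_pow] at h6
  have hlogb4 : Real.logb 2 4 = 2 := by
    rw [show (4:ℝ) = 2^2 by norm_num, Real.logb_pow, Real.logb_self_eq_one one_lt_two]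
    norm_num
  rw [hlogb4] at h6
  push_cast at h6
  linarith

end Stmt17Aux

open Stmt17Aux

/-- `lg E(n) ≥ 2n − O(log n)` for the number `E(n)` of extended Cartesian trees on `n`
nodes, and consequently the effective entropy of range top-2 queries on arrays of
length `n` (the `lg` of the number of distinct answer functions) is also
`≥ 2n − O(log n)` bits. -/
theorem stmt17 :
    ∃ C : ℝ, 0 < C ∧ ∀ n : ℕ, 2 ≤ n →
      (2 * (n : ℝ) - C * Real.logb 2 n ≤
          Real.logb 2 (Nat.card {e : EBT // e.size = n ∧ e.valid})) ∧
      (2 * (n : ℝ) - C * Real.logb 2 n ≤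
          Real.logb 2 (Set.ncard { f : ∀ i j : Fin n, i < j → Fin n × Fin n |
            ∃ A : Fin n → ℝ, Function.Injective A ∧
              ∀ i j (h : i < j),
                isArgmin A i j (f i j h).1 ∧ isSecondMin A i j (f i j h).2 })) := by
  refine ⟨4, by norm_num, fun n hn => ⟨?_, ?_⟩⟩
  · -- Part 1
    haveI := finite_valid_ebt n
    have hcard : catalan n ≤ Nat.card {e : EBT // e.size = n ∧ e.valid} := by
      have hinj : Function.Injective (fun u : ↥(Tree.treesOfNumNodesEq n) =>
          (⟨toEBT u.1, by rw [toEBT_size]; exact BinaryTree.mem_treesOfNumNodesEq.1 u.2,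
            toEBT_valid u.1⟩ : {e : EBT // e.size = n ∧ e.valid})) := by
        intro a b h
        simp only [Subtype.mk.injEq] at h
        exact Subtype.ext (toEBT_injective h)
      have := Nat.card_le_card_of_injective _ hinj
      rwa [Nat.card_eq_fintype_card, Fintype.card_coe,
        BinaryTree.treesOfNumNodesEq_card_eq_catalan] at this
    have hcat := catalan_lower n hn
    have hcpos : 0 < catalan n := by
      by_contra hc
      push_neg at hc
      have h2 := succ_mul_catalan_eq_centralBinom n
      have := Nat.centralBinom_pos n
      interval_cases h : catalan n
      · omega
    have hmono : Real.logb 2 (catalan n) ≤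
        Real.logb 2 (Nat.card {e : EBT // e.size = n ∧ e.valid}) :=
      Real.logb_le_logb_of_le one_lt_two (by exact_mod_cast hcpos) (by exact_mod_cast hcard)
    linarith
  · -- Part 2
    set S : Set (∀ i j : Fin n, i < j → Fin n × Fin n) :=
      { f | ∃ A : Fin n → ℝ, Function.Injective A ∧
        ∀ i j (h : i < j), isArgmin A i j (f i j h).1 ∧ isSecondMin A i j (f i j h).2 } with hS
    have hcard : catalan n ≤ S.ncard := by
      rw [← Nat.card_coe_set_eq]
      have hmemS : ∀ u : ↥(Tree.treesOfNumNodesEq n), ansF (arr (toBT u.1) n) ∈ S := by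
        intro u
        have hsz : (toBT u.1).size = n := by
          rw [toBT_size]; exact BinaryTree.mem_treesOfNumNodesEq.1 u.2
        exact ⟨arr (toBT u.1) n, arr_injective hsz,
          fun i j h => ansF_spec (arr (toBT u.1) n) i j h⟩
      have hinj : Function.Injective
          (fun u : ↥(Tree.treesOfNumNodesEq n) => (⟨ansF (arr (toBT u.1) n), hmemS u⟩ : ↥S)) := by
        intro a b h
        simp only [Subtype.mk.injEq] at h
        have hsa : (toBT a.1).size = n := by
          rw [toBT_size]; exact BinaryTree.mem_treesOfNumNodesEq.1 a.2
        have hsb : (toBT b.1).size = n := by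
          rw [toBT_size]; exact BinaryTree.mem_treesOfNumNodesEq.1 b.2
        exact Subtype.ext (toBT_injective (tree_eq_of_ansF_eq hn hsa hsb h))
      have := Nat.card_le_card_of_injective _ hinj
      rwa [Nat.card_eq_fintype_card, Fintype.card_coe,
        BinaryTree.treesOfNumNodesEq_card_eq_catalan] at this
    have hcat := catalan_lower n hn
    have hcpos : 0 < catalan n := by
      by_contra hc
      push_neg at hc
      have h2 := succ_mul_catalan_eq_centralBinom n
      have := Nat.centralBinom_pos n
      interval_cases h : catalan n
      · omega
    have hmono : Real.logb 2 (catalan n) ≤ Real.logb 2 (S.ncard) :=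
      Real.logb_le_logb_of_le one_lt_two (by exact_mod_cast hcpos) (by exact_mod_cast hcard)
    linarith
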